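/- There exists a family of Boolean functions (f_n)_{n∈ℕ}, f_n : {0,1}^n × {0,1}^n → {0,1}, such that the randomized garden-hose complexity GH_{ε(n)}(f_n) with ε(n) = 1/2 − 1/n is not bounded above by any polynomial in n (indeed it is exponential in n). -/

import Mathlib

/-- A partial matching on the vertex type `V`, encoded by a partner function:
`m i = some j` means that there is an edge between `i` and `j`;
the graph `{ {i,j} | m i = some j }` then has maximum degree at most `1`
and no self-loops. -/
def IsPartialMatching {V : Type*} (m : V → Option V) : Prop :=
  ∀ i j, m i = some j → i ≠ j ∧ m j = some i

/-- The position of the water in a garden-hose game with `s` pipes: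
`atAlice i` (resp. `atBob i`) means the water has just arrived at Alice's
(resp. Bob's) end of pipe `i`; `exitA` / `exitB` mean the water has exited
on Alice's / Bob's side, i.e. the maximal path starting at the tap has ended
in `A∘` / in `B`. -/
inductive GHState (s : ℕ) where
  | atAlice : Fin s → GHState s
  | atBob : Fin s → GHState s
  | exitA : GHState s
  | exitB : GHState s
  deriving DecidableEq

/-- Vertex `k` of `A∘ = {0, 1, ..., s}` viewed as a pipe: vertex `0` is the water
tap (no pipe), and vertex `i + 1` is Alice's end of pipe `i`. -/
def toPipe {s : ℕ} (k : Fin (s + 1)) : Option (Fin s) :=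
  if h : (k : ℕ) = 0 then none
  else some ⟨(k : ℕ) - 1, by have := k.isLt; omega⟩

/-- One step of the water flow, given Alice's connections `a` on `A∘ = {0,...,s}`
and Bob's connections `b` on `B = {1,...,s}` (indexed by pipes `Fin s`). -/
def ghStep {s : ℕ} (a : Fin (s + 1) → Option (Fin (s + 1)))
    (b : Fin s → Option (Fin s)) : GHState s → GHState s
  | GHState.atAlice i =>
    match a i.succ with
    | none => GHState.exitA
    | some k =>
      match toPipe k with
      | none => GHState.exitA
      | some p => GHState.atBob p
  | GHState.atBob i =>
    match b i with
    | none => GHState.exitB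
    | some j => GHState.atAlice j
  | GHState.exitA => GHState.exitA
  | GHState.exitB => GHState.exitB

/-- The start of the water flow: the tap (vertex `0` of `A∘`) is connected by
Alice to at most one pipe. -/
def ghStart {s : ℕ} (a : Fin (s + 1) → Option (Fin (s + 1))) : GHState s :=
  match a 0 with
  | none => GHState.exitA
  | some k =>
    match toPipe k with
    | none => GHState.exitA
    | some p => GHState.atBob p

/-- The endpoint of the maximal path `π(x,y)` starting at the tap: since the graph
has maximum degree `2` and the path is simple, it is reached after at most
`2s + 2` steps. -/
def ghResult {s : ℕ} (a : Fin (s + 1) → Option (Fin (s + 1)))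
    (b : Fin s → Option (Fin s)) : GHState s :=
  (ghStep a b)^[2 * s + 2] (ghStart a)

/-- A garden-hose game of size `s` on inputs `{0,1}^n × {0,1}^n`: for every input
`x` Alice chooses a partial matching `EA x` on `A∘ = {0,1,…,s}` and for every
input `y` Bob chooses a partial matching `EB y` on `B = {1,…,s}`. -/
structure GHGame (n s : ℕ) where
  EA : (Fin n → Bool) → Fin (s + 1) → Option (Fin (s + 1))
  EB : (Fin n → Bool) → Fin s → Option (Fin s)
  matchA : ∀ x, IsPartialMatching (EA x)
  matchB : ∀ y, IsPartialMatching (EB y)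

/-- Where the water exits on input `(x, y)`. -/
def GHGame.run {n s : ℕ} (G : GHGame n s) (x y : Fin n → Bool) : GHState s :=
  ghResult (G.EA x) (G.EB y)

/-- The game `G` computes `f` if for all inputs the maximal path from the tap ends
in `A∘` whenever `f x y = 0` (water exits on Alice's side) and in `B` whenever
`f x y = 1` (water exits on Bob's side). -/
def GHGame.Computes {n s : ℕ} (G : GHGame n s)
    (f : (Fin n → Bool) → (Fin n → Bool) → Bool) : Prop :=
  ∀ x y, G.run x y = if f x y then GHState.exitB else GHState.exitA

/-- The garden-hose complexity of `f`: the minimal number of pipes of a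
garden-hose game computing `f`. -/
noncomputable def GH {n : ℕ} (f : (Fin n → Bool) → (Fin n → Bool) → Bool) : ℕ :=
  sInf {s : ℕ | ∃ G : GHGame n s, G.Computes f}
/-- A randomized garden-hose protocol of size `s` for `f` with error `ε`:
a finite set (indexed by `Fin k`) equipped with a probability distribution
`prob` and, for each random string `r`, a garden-hose game `game r` of size `s`
such that for every input `(x, y)` the probability over `r` that `game r`
computes the value `f x y` at `(x, y)` is at least `1 - ε`. -/
structure RandGHProtocol (n s : ℕ) (f : (Fin n → Bool) → (Fin n → Bool) → Bool)
    (ε : ℝ) where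
  k : ℕ
  prob : Fin k → ℝ
  prob_nonneg : ∀ r, 0 ≤ prob r
  prob_sum : ∑ r, prob r = 1
  game : Fin k → GHGame n s
  correct : ∀ x y, 1 - ε ≤ ∑ r,
    if (game r).run x y = (if f x y then GHState.exitB else GHState.exitA)
    then prob r else 0

/-- The randomized garden-hose complexity `GH_ε(f)`: the minimal size of a
randomized garden-hose protocol for `f` with error `ε`. -/
noncomputable def GHr {n : ℕ} (ε : ℝ)
    (f : (Fin n → Bool) → (Fin n → Bool) → Bool) : ℕ :=
  sInf {s : ℕ | Nonempty (RandGHProtocol n s f ε)}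

namespace GHProof

open Finset

abbrev X (n : ℕ) := Fin n → Bool

noncomputable def enc (n : ℕ) : X n ≃ Fin (2 ^ n) :=
  (Equiv.piCongrRight fun _ => finTwoEquiv.symm).trans finFunctionFinEquiv

lemma ghStep_exitA {s : ℕ} (a : Fin (s + 1) → Option (Fin (s + 1)))
    (b : Fin s → Option (Fin s)) : ghStep a b GHState.exitA = GHState.exitA := rfl

lemma ghStep_exitB {s : ℕ} (a : Fin (s + 1) → Option (Fin (s + 1)))
    (b : Fin s → Option (Fin s)) : ghStep a b GHState.exitB = GHState.exitB := rfl

lemma iterate_exit {s : ℕ} (a : Fin (s + 1) → Option (Fin (s + 1)))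
    (b : Fin s → Option (Fin s)) (st : GHState s) (j k : ℕ) (hjk : j ≤ k)
    (z : GHState s) (hz : z = GHState.exitA ∨ z = GHState.exitB)
    (h : (ghStep a b)^[j] st = z) : (ghStep a b)^[k] st = z := by
  obtain ⟨d, rfl⟩ := Nat.exists_eq_add_of_le hjk
  rw [Nat.add_comm, Function.iterate_add_apply, h]
  rcases hz with rfl | rfl
  · exact Function.iterate_fixed (ghStep_exitA a b) d
  · exact Function.iterate_fixed (ghStep_exitB a b) d

variable (n : ℕ) (f : X n → X n → Bool)

noncomputable def bigA (x : X n) :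
    Fin (2 * 2 ^ n + 1) → Option (Fin (2 * 2 ^ n + 1)) := fun v =>
  if (v : ℕ) = 0 then some ⟨(enc n x : ℕ) + 1, by have := (enc n x).isLt; omega⟩
  else if (v : ℕ) = (enc n x : ℕ) + 1 then some ⟨0, by omega⟩
  else none

noncomputable def bigB (y : X n) : Fin (2 * 2 ^ n) → Option (Fin (2 * 2 ^ n)) := fun v =>
  if h : (v : ℕ) < 2 ^ n then
    if f ((enc n).symm ⟨(v : ℕ), h⟩) y then none
    else some ⟨(v : ℕ) + 2 ^ n, by have := v.isLt; omega⟩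
  else
    if f ((enc n).symm ⟨(v : ℕ) - 2 ^ n, by have := v.isLt; omega⟩) y then none
    else some ⟨(v : ℕ) - 2 ^ n, by have := v.isLt; omega⟩

noncomputable def bigGame : GHGame n (2 * 2 ^ n) where
  EA := bigA n
  EB := bigB n f
  matchA := by
    intro x i j hij
    have hx := (enc n x).isLt
    unfold bigA at hij
    split_ifs at hij with h1 h2
    · injection hij with hj; subst hj
      refine ⟨fun h => ?_, ?_⟩
      · have hv : (i : ℕ) = (enc n x : ℕ) + 1 := congrArg Fin.val h
        omega
      · unfold bigA
        rw [if_neg (show ¬((enc n x : ℕ) + 1 = 0) by omega),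
          if_pos (show (enc n x : ℕ) + 1 = (enc n x : ℕ) + 1 from rfl)]
        exact congrArg some (Fin.ext h1.symm)
    · injection hij with hj; subst hj
      refine ⟨fun h => ?_, ?_⟩
      · have hv : (i : ℕ) = (0 : ℕ) := congrArg Fin.val h
        omega
      · unfold bigA
        rw [if_pos (show (0 : ℕ) = 0 from rfl)]
        exact congrArg some (Fin.ext h2.symm)
  matchB := by
    intro y i j hij
    have hi := i.isLt
    unfold bigB at hij
    split_ifs at hij with h1 hf hf
    · injection hij with hj; subst hj
      refine ⟨fun h => ?_, ?_⟩
      · have hv : (i : ℕ) = (i : ℕ) + 2 ^ n := congrArg Fin.val h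
        have hE : 0 < 2 ^ n := Nat.pow_pos (by norm_num)
        omega
      · unfold bigB
        rw [dif_neg (show ¬((i : ℕ) + 2 ^ n < 2 ^ n) by omega)]
        have he : ((enc n).symm ⟨(i : ℕ) + 2 ^ n - 2 ^ n, by omega⟩ : X n)
            = (enc n).symm ⟨(i : ℕ), h1⟩ :=
          congrArg _ (Fin.ext (show (i : ℕ) + 2 ^ n - 2 ^ n = (i : ℕ) by omega))
        split_ifs with hg
        · rw [he] at hg; exact absurd hg hf
        · exact congrArg some (Fin.ext (show (i : ℕ) + 2 ^ n - 2 ^ n = (i : ℕ) by omega))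
    · injection hij with hj; subst hj
      refine ⟨fun h => ?_, ?_⟩
      · have hv : (i : ℕ) = (i : ℕ) - 2 ^ n := congrArg Fin.val h
        omega
      · unfold bigB
        rw [dif_pos (show (i : ℕ) - 2 ^ n < 2 ^ n by omega)]
        rw [if_neg (show ¬(f ((enc n).symm ⟨(i : ℕ) - 2 ^ n, by omega⟩) y = true) from hf)]
        exact congrArg some (Fin.ext (show (i : ℕ) - 2 ^ n + 2 ^ n = (i : ℕ) by omega))

end GHProof
namespace GHProof

variable (n : ℕ) (f : X n → X n → Bool)

lemma bigA_eq_none (x : X n) (v : Fin (2 * 2 ^ n + 1)) (h0 : (v : ℕ) ≠ 0)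
    (h1 : (v : ℕ) ≠ (enc n x : ℕ) + 1) : bigA n x v = none := by
  unfold bigA; rw [if_neg h0, if_neg h1]

lemma bigGame_computes : (bigGame n f).Computes f := by
  intro x y
  have hx := (enc n x).isLt
  have hE : 0 < 2 ^ n := Nat.pow_pos (by norm_num)
  show ghResult (bigA n x) (bigB n f y) = _
  have hstart : ghStart (bigA n x) = GHState.atBob ⟨(enc n x : ℕ), by omega⟩ := rfl
  have hb : bigB n f y ⟨(enc n x : ℕ), by omega⟩
      = if f x y then none else some ⟨(enc n x : ℕ) + 2 ^ n, by omega⟩ := by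
    unfold bigB
    rw [dif_pos (show (enc n x : ℕ) < 2 ^ n from hx)]
    rw [show ((enc n).symm ⟨(enc n x : ℕ), hx⟩ : X n) = x from by
      rw [show (⟨(enc n x : ℕ), hx⟩ : Fin (2 ^ n)) = enc n x from Fin.ext rfl,
        Equiv.symm_apply_apply]]
  have hstep1 : ghStep (bigA n x) (bigB n f y) (GHState.atBob ⟨(enc n x : ℕ), by omega⟩)
      = if f x y then GHState.exitB
        else GHState.atAlice ⟨(enc n x : ℕ) + 2 ^ n, by omega⟩ := by
    simp only [ghStep]
    rw [hb]
    cases f x y <;> simp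
  unfold ghResult
  cases hf : f x y
  · rw [hf] at hstep1; simp only [Bool.false_eq_true, if_false] at hstep1
    have ha : bigA n x (Fin.succ (⟨(enc n x : ℕ) + 2 ^ n, by omega⟩ : Fin (2 * 2 ^ n)))
        = none :=
      bigA_eq_none n x _ (by show (enc n x : ℕ) + 2 ^ n + 1 ≠ 0; omega)
        (by show (enc n x : ℕ) + 2 ^ n + 1 ≠ (enc n x : ℕ) + 1; omega)
    have hstep2 : ghStep (bigA n x) (bigB n f y)
        (GHState.atAlice ⟨(enc n x : ℕ) + 2 ^ n, by omega⟩) = GHState.exitA := by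
      simp only [ghStep]
      rw [ha]
    refine iterate_exit _ _ _ 3 _ (by omega) _ (Or.inl rfl) ?_
    rw [Function.iterate_succ_apply', Function.iterate_succ_apply', Function.iterate_one,
      hstart, hstep1, hstep2, ghStep_exitA]
    rfl
  · rw [hf] at hstep1; simp only [if_true] at hstep1
    refine iterate_exit _ _ _ 2 _ (by omega) _ (Or.inr rfl) ?_
    rw [Function.iterate_succ_apply', Function.iterate_one, hstart, hstep1, ghStep_exitB]
    rfl

lemma exists_protocol (hn : 2 ≤ n) :
    Nonempty (RandGHProtocol n (2 * 2 ^ n) f ((1 : ℝ) / 2 - 1 / (n : ℝ))) := by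
  refine ⟨⟨1, fun _ => 1, fun _ => zero_le_one, by simp, fun _ => bigGame n f, ?_⟩⟩
  intro x y
  rw [Fin.sum_univ_one, if_pos (bigGame_computes n f x y)]
  have hn' : (2 : ℝ) ≤ (n : ℝ) := by exact_mod_cast hn
  have h1 : 1 / (n : ℝ) ≤ 1 / 2 := by
    apply one_div_le_one_div_of_le <;> linarith
  linarith

end GHProof
namespace GHProof

open Finset

lemma exp_le_quad {x : ℝ} (h : |x| ≤ 1) : Real.exp x ≤ 1 + x + x ^ 2 := by
  have hb := Real.exp_bound h (n := 2) (by norm_num)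
  have h2 : ∑ i ∈ range 2, x ^ i / (Nat.factorial i : ℝ) = 1 + x := by
    simp [Finset.sum_range_succ, Nat.factorial]
  rw [h2] at hb
  have habs : |x| ^ 2 = x ^ 2 := sq_abs x
  have h3 : |x| ^ 2 * (((2 : ℕ) + 1 : ℕ) / ((Nat.factorial 2 : ℕ) * 2) : ℝ) ≤ x ^ 2 := by
    rw [habs]
    have h4 : (((2 : ℕ) + 1 : ℕ) / ((Nat.factorial 2 : ℕ) * 2) : ℝ) = 3 / 4 := by
      norm_num [Nat.factorial]
    rw [h4]
    nlinarith [sq_nonneg x]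
  have h5 := abs_le.mp hb
  nlinarith [h5.2]

lemma sum_pow_eq (m k : ℕ) (h : Fin k → ℝ) :
    ∑ σ : Fin m → Fin k, ∏ i, h (σ i) = (∑ r, h r) ^ m := by
  classical
  rw [← Fintype.piFinset_univ, ← Finset.prod_univ_sum]
  simp [Finset.prod_const]

lemma sampling (n k : ℕ) (hn : 1 ≤ n) {I : Type} [Fintype I]
    (hI : (Fintype.card I : ℝ) < Real.exp (2 * n))
    (p : Fin k → ℝ) (hp : ∀ r, 0 ≤ p r) (hps : ∑ r, p r = 1)
    (c : Fin k → I → ℝ) (hc0 : ∀ r t, 0 ≤ c r t) (hc1 : ∀ r t, c r t ≤ 1) :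
    ∃ σ : Fin (32 * n ^ 3) → Fin k, ∀ t : I,
      ((∑ r, p r * c r t) - 1 / (2 * n)) * (32 * n ^ 3 : ℕ) ≤ ∑ i, c (σ i) t := by
  classical
  set m : ℕ := 32 * n ^ 3 with hm
  have hm0 : 0 < m := by positivity
  have hnR : (1 : ℝ) ≤ (n : ℝ) := by exact_mod_cast hn
  have hn0 : (0 : ℝ) < n := by linarith
  set lam : ℝ := 1 / (4 * n) with hlam
  set eps : ℝ := 1 / (2 * n) with heps
  have hlam0 : 0 < lam := by rw [hlam]; positivity
  have hlam1 : lam ≤ 1 := by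
    rw [hlam, div_le_one (by positivity)]; linarith
  set μ : I → ℝ := fun t => ∑ r, p r * c r t with hμ
  have hμ0 : ∀ t, 0 ≤ μ t := fun t => Finset.sum_nonneg fun r _ =>
    mul_nonneg (hp r) (hc0 r t)
  have hμ1 : ∀ t, μ t ≤ 1 := by
    intro t
    calc μ t ≤ ∑ r, p r := Finset.sum_le_sum fun r _ => by
          have h1 := hc1 r t; have h2 := hp r; nlinarith
    _ = 1 := hps
  set w : (Fin m → Fin k) → ℝ := fun σ => ∏ i, p (σ i) with hw
  have hw0 : ∀ σ, 0 ≤ w σ := fun σ => Finset.prod_nonneg fun i _ => hp (σ i)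
  have hwsum : ∑ σ, w σ = 1 := by rw [hw]; rw [sum_pow_eq, hps, one_pow]
  set g : I → Fin k → ℝ := fun t r => p r * Real.exp (lam * (μ t - c r t)) with hg
  have hg0 : ∀ t r, 0 ≤ g t r := fun t r => mul_nonneg (hp r) (Real.exp_pos _).le
  have hdiff : ∀ t r, |μ t - c r t| ≤ 1 := by
    intro t r
    rw [abs_le]
    have h1 := hc1 r t; have h2 := hμ0 t; have h3 := hμ1 t; have h4 := hc0 r t
    constructor <;> linarith
  have hgsum : ∀ t, ∑ r, g t r ≤ 1 + lam ^ 2 := by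
    intro t
    have hterm : ∀ r, g t r ≤ p r * (1 + lam * (μ t - c r t) + lam ^ 2) := by
      intro r
      have hy : |lam * (μ t - c r t)| ≤ 1 := by
        rw [abs_mul, abs_of_pos hlam0]
        nlinarith [hdiff t r, abs_nonneg (μ t - c r t)]
      have hexp := exp_le_quad hy
      have hsq : (lam * (μ t - c r t)) ^ 2 ≤ lam ^ 2 := by
        rw [mul_pow]
        have h1 : (μ t - c r t) ^ 2 ≤ 1 := by
          nlinarith [hdiff t r, sq_abs (μ t - c r t), abs_nonneg (μ t - c r t)]
        nlinarith [sq_nonneg lam]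
      have hpr := hp r
      have : Real.exp (lam * (μ t - c r t)) ≤ 1 + lam * (μ t - c r t) + lam ^ 2 := by
        nlinarith
      rw [hg]
      exact mul_le_mul_of_nonneg_left this hpr
    calc ∑ r, g t r ≤ ∑ r, p r * (1 + lam * (μ t - c r t) + lam ^ 2) :=
          Finset.sum_le_sum fun r _ => hterm r
      _ = ∑ r, (p r + lam * (p r * μ t - p r * c r t) + lam ^ 2 * p r) :=
          Finset.sum_congr rfl fun r _ => by ring
      _ = (∑ r, p r) + lam * ((∑ r, p r * μ t) - ∑ r, p r * c r t)
            + lam ^ 2 * ∑ r, p r := by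
          rw [Finset.sum_add_distrib, Finset.sum_add_distrib, ← Finset.mul_sum,
            Finset.sum_sub_distrib, ← Finset.mul_sum]
      _ = 1 + lam ^ 2 := by
          have hA : ∑ r, p r * μ t = μ t := by rw [← Finset.sum_mul, hps, one_mul]
          rw [hA, hps, show (∑ r, p r * c r t) = μ t from rfl]; ring
  -- Markov / union bound part
  have hmcast : ((m : ℕ) : ℝ) = 32 * (n : ℝ) ^ 3 := by rw [hm]; push_cast; ring
  have hkey : ∀ t, ∑ σ ∈ univ.filter (fun σ : Fin m → Fin k =>
      ∑ i, c (σ i) t < (μ t - eps) * m), w σ ≤ Real.exp (-(2 * n)) := by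
    intro t
    have hprod : ∀ σ : Fin m → Fin k,
        ∏ i, g t (σ i) = w σ * Real.exp (lam * (m * μ t - ∑ i, c (σ i) t)) := by
      intro σ
      rw [hg, hw]
      rw [show (∏ i, p (σ i) * Real.exp (lam * (μ t - c (σ i) t)))
          = (∏ i, p (σ i)) * ∏ i, Real.exp (lam * (μ t - c (σ i) t)) from
        Finset.prod_mul_distrib]
      congr 1
      rw [← Real.exp_sum]
      congr 1
      rw [← Finset.mul_sum, Finset.sum_sub_distrib, Finset.sum_const, card_univ,
        Fintype.card_fin, nsmul_eq_mul]
    have hσbound : ∀ σ ∈ univ.filter (fun σ : Fin m → Fin k =>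
        ∑ i, c (σ i) t < (μ t - eps) * m),
        w σ ≤ Real.exp (-(lam * eps * m)) * ∏ i, g t (σ i) := by
      intro σ hσ
      rw [Finset.mem_filter] at hσ
      have hS : ∑ i, c (σ i) t < (μ t - eps) * m := hσ.2
      have h1 : lam * eps * m ≤ lam * (m * μ t - ∑ i, c (σ i) t) := by
        have : eps * m ≤ m * μ t - ∑ i, c (σ i) t := by nlinarith
        nlinarith [hlam0.le]
      rw [hprod σ]
      have hee : Real.exp (-(lam * eps * (m : ℝ))) * Real.exp (lam * eps * (m : ℝ)) = 1 := by
        rw [← Real.exp_add]; simp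
      calc w σ = Real.exp (-(lam * eps * m)) * (w σ * Real.exp (lam * eps * m)) := by
            rw [show Real.exp (-(lam * eps * (m : ℝ))) * (w σ * Real.exp (lam * eps * (m : ℝ)))
              = (Real.exp (-(lam * eps * (m : ℝ))) * Real.exp (lam * eps * (m : ℝ))) * w σ
              from by ring, hee, one_mul]
        _ ≤ Real.exp (-(lam * eps * m)) * (w σ * Real.exp (lam * (m * μ t - ∑ i, c (σ i) t))) := by
            have hle := Real.exp_le_exp.mpr h1
            have h2 := hw0 σ
            have h3 := (Real.exp_pos (-(lam * eps * (m : ℝ)))).le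
            exact mul_le_mul_of_nonneg_left (mul_le_mul_of_nonneg_left hle h2) h3
    calc ∑ σ ∈ univ.filter (fun σ : Fin m → Fin k =>
          ∑ i, c (σ i) t < (μ t - eps) * m), w σ
        ≤ ∑ σ ∈ univ.filter (fun σ : Fin m → Fin k =>
          ∑ i, c (σ i) t < (μ t - eps) * m),
            Real.exp (-(lam * eps * m)) * ∏ i, g t (σ i) :=
          Finset.sum_le_sum hσbound
      _ ≤ ∑ σ : Fin m → Fin k, Real.exp (-(lam * eps * m)) * ∏ i, g t (σ i) :=
          Finset.sum_le_sum_of_subset_of_nonneg (Finset.filter_subset _ _)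
            (fun σ _ _ => mul_nonneg (Real.exp_pos _).le
              (Finset.prod_nonneg fun i _ => hg0 t (σ i)))
      _ = Real.exp (-(lam * eps * m)) * (∑ r, g t r) ^ m := by
          rw [← Finset.mul_sum, sum_pow_eq]
      _ ≤ Real.exp (-(lam * eps * m)) * Real.exp (lam ^ 2 * m) := by
          have h1 : (∑ r, g t r) ^ m ≤ (1 + lam ^ 2) ^ m :=
            pow_le_pow_left₀ (Finset.sum_nonneg fun r _ => hg0 t r) (hgsum t) m
          have h2 : (1 + lam ^ 2) ^ m ≤ Real.exp (lam ^ 2 * m) := by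
            calc (1 + lam ^ 2) ^ m ≤ Real.exp (lam ^ 2) ^ m := by
                  apply pow_le_pow_left₀ (by positivity)
                  rw [add_comm]
                  exact Real.add_one_le_exp _
              _ = Real.exp (lam ^ 2 * m) := by
                  rw [← Real.exp_nat_mul]; ring_nf
            
          have h3 := (Real.exp_pos (-(lam * eps * m))).le
          nlinarith
      _ = Real.exp (-(2 * n)) := by
          rw [← Real.exp_add]
          congr 1
          rw [hmcast, hlam, heps]
          field_simp
          ring
  by_contra hcon
  push_neg at hcon
  have hbadall : ∀ σ : Fin m → Fin k, ∃ t, ∑ i, c (σ i) t < (μ t - eps) * m := by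
    intro σ
    obtain ⟨t, ht⟩ := hcon σ
    exact ⟨t, ht⟩
  have hONE : (1 : ℝ) ≤ ∑ t : I, ∑ σ ∈ univ.filter (fun σ : Fin m → Fin k =>
      ∑ i, c (σ i) t < (μ t - eps) * m), w σ := by
    have hstep : ∀ σ : Fin m → Fin k, w σ ≤ ∑ t : I,
        if ∑ i, c (σ i) t < (μ t - eps) * m then w σ else 0 := by
      intro σ
      obtain ⟨t0, ht0⟩ := hbadall σ
      have := Finset.single_le_sum (f := fun t : I =>
        if ∑ i, c (σ i) t < (μ t - eps) * m then w σ else 0)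
        (fun t _ => by
          split_ifs with h
          exacts [hw0 σ, le_rfl])
        (Finset.mem_univ t0)
      rwa [if_pos ht0] at this
    calc (1 : ℝ) = ∑ σ, w σ := hwsum.symm
      _ ≤ ∑ σ : Fin m → Fin k, ∑ t : I,
          if ∑ i, c (σ i) t < (μ t - eps) * m then w σ else 0 :=
          Finset.sum_le_sum fun σ _ => hstep σ
      _ = ∑ t : I, ∑ σ : Fin m → Fin k,
          if ∑ i, c (σ i) t < (μ t - eps) * m then w σ else 0 := Finset.sum_comm
      _ = ∑ t : I, ∑ σ ∈ univ.filter (fun σ : Fin m → Fin k =>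
          ∑ i, c (σ i) t < (μ t - eps) * m), w σ := by
          refine Finset.sum_congr rfl fun t _ => ?_
          rw [Finset.sum_filter]
  have hLT : ∑ t : I, ∑ σ ∈ univ.filter (fun σ : Fin m → Fin k =>
      ∑ i, c (σ i) t < (μ t - eps) * m), w σ < 1 := by
    calc ∑ t : I, ∑ σ ∈ univ.filter (fun σ : Fin m → Fin k =>
        ∑ i, c (σ i) t < (μ t - eps) * m), w σ
        ≤ ∑ _t : I, Real.exp (-(2 * n)) := Finset.sum_le_sum fun t _ => hkey t
      _ = Fintype.card I * Real.exp (-(2 * n)) := by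
          rw [Finset.sum_const, card_univ, nsmul_eq_mul]
      _ < Real.exp (2 * n) * Real.exp (-(2 * n)) := by
          have := Real.exp_pos (-(2 * (n : ℝ)))
          have hcard : (0 : ℝ) ≤ (Fintype.card I : ℝ) := by positivity
          nlinarith
      _ = 1 := by rw [← Real.exp_add]; simp
  linarith

end GHProof
namespace GHProof

open Finset

def Phi (n s : ℕ)
    (t : Fin (32 * n ^ 3) → ((X n → Fin (s + 1) → Option (Fin (s + 1)))
      × (X n → Fin s → Option (Fin s)))) : X n → X n → Bool :=
  fun x y => decide (32 * n ^ 3 < 2 * (Finset.univ.filter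
    (fun i : Fin (32 * n ^ 3) =>
      ghResult ((t i).1 x) ((t i).2 y) = GHState.exitB)).card)

lemma phi_covers (n s : ℕ) (hn : 1 ≤ n) (f : X n → X n → Bool)
    (hP : Nonempty (RandGHProtocol n s f ((1 : ℝ) / 2 - 1 / (n : ℝ)))) :
    ∃ t, Phi n s t = f := by
  classical
  obtain ⟨P⟩ := hP
  have hnR : (1 : ℝ) ≤ (n : ℝ) := by exact_mod_cast hn
  have hn0 : (0 : ℝ) < (n : ℝ) := by linarith
  set c : Fin P.k → (X n × X n) → ℝ := fun r xy =>
    if (P.game r).run xy.1 xy.2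
        = (if f xy.1 xy.2 then GHState.exitB else GHState.exitA) then 1 else 0 with hc
  have hc0 : ∀ r xy, 0 ≤ c r xy := by
    intro r xy; rw [hc]; dsimp only; split_ifs <;> norm_num
  have hc1 : ∀ r xy, c r xy ≤ 1 := by
    intro r xy; rw [hc]; dsimp only; split_ifs <;> norm_num
  have hI : ((Fintype.card (X n × X n) : ℕ) : ℝ) < Real.exp (2 * (n : ℝ)) := by
    have hcard : (Fintype.card (X n × X n) : ℕ) = 2 ^ n * 2 ^ n := by
      simp [Fintype.card_prod, Fintype.card_fun]
    rw [hcard]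
    have h2e : (2 : ℝ) < Real.exp 1 := by
      have h9 := Real.exp_one_gt_d9
      norm_num at h9 ⊢
      linarith
    calc ((2 ^ n * 2 ^ n : ℕ) : ℝ) = (2 : ℝ) ^ (n + n) := by push_cast; rw [pow_add]
      _ < Real.exp 1 ^ (n + n) := by
          apply pow_lt_pow_left₀ h2e (by norm_num)
          omega
      _ = Real.exp ((n + n : ℕ) * 1) := by rw [Real.exp_nat_mul]
      _ = Real.exp (2 * (n : ℝ)) := by congr 1; push_cast; ring
  have hμ : ∀ xy : X n × X n, 1 / 2 + 1 / (n : ℝ) ≤ ∑ r, P.prob r * c r xy := by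
    intro xy
    have hcor := P.correct xy.1 xy.2
    have he : ∑ r, (if (P.game r).run xy.1 xy.2
        = (if f xy.1 xy.2 then GHState.exitB else GHState.exitA)
        then P.prob r else 0) = ∑ r, P.prob r * c r xy := by
      refine Finset.sum_congr rfl fun r _ => ?_
      rw [hc]; dsimp only; split_ifs <;> simp
    rw [he] at hcor
    calc 1 / 2 + 1 / (n : ℝ) = 1 - ((1 : ℝ) / 2 - 1 / (n : ℝ)) := by ring
      _ ≤ _ := hcor
  obtain ⟨σ, hσ⟩ := sampling n P.k hn hI P.prob P.prob_nonneg P.prob_sum c hc0 hc1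
  refine ⟨fun i => ((P.game (σ i)).EA, (P.game (σ i)).EB), ?_⟩
  funext x y
  have hm0 : (0 : ℝ) < ((32 * n ^ 3 : ℕ) : ℝ) := by positivity
  have hkey : (1 / 2 + 1 / (2 * (n : ℝ))) * ((32 * n ^ 3 : ℕ) : ℝ) ≤ ∑ i, c (σ i) (x, y) := by
    have h1 := hσ (x, y)
    have h2 := hμ (x, y)
    have h3 : (1 / 2 + 1 / (2 * (n : ℝ)))
        ≤ (∑ r, P.prob r * c r (x, y)) - 1 / (2 * (n : ℝ)) := by
      have hne : (n : ℝ) ≠ 0 := ne_of_gt hn0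
      have : 1 / (2 * (n : ℝ)) + 1 / (2 * (n : ℝ)) = 1 / (n : ℝ) := by
        rw [← two_mul, mul_one_div, ← div_div]
        norm_num
      linarith
    calc (1 / 2 + 1 / (2 * (n : ℝ))) * ((32 * n ^ 3 : ℕ) : ℝ)
        ≤ ((∑ r, P.prob r * c r (x, y)) - 1 / (2 * (n : ℝ))) * ((32 * n ^ 3 : ℕ) : ℝ) :=
          mul_le_mul_of_nonneg_right h3 hm0.le
      _ ≤ ∑ i, c (σ i) (x, y) := h1
  -- counting interpretation
  have hsum_card : ∀ z : GHState s,
      (∑ i : Fin (32 * n ^ 3), (if (P.game (σ i)).run x y = z then (1 : ℝ) else 0))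
      = ((Finset.univ.filter (fun i : Fin (32 * n ^ 3) => (P.game (σ i)).run x y = z)).card : ℝ) := by
    intro z
    rw [Finset.sum_boole]
  have hfilter : ∀ z : GHState s,
      (Finset.univ.filter (fun i : Fin (32 * n ^ 3) =>
        ghResult ((P.game (σ i)).EA x) ((P.game (σ i)).EB y) = z))
      = (Finset.univ.filter (fun i : Fin (32 * n ^ 3) => (P.game (σ i)).run x y = z)) := by
    intro z; rfl
  cases hf : f x y
  · -- f x y = false : target is exitA
    have hcA : (1 / 2 + 1 / (2 * (n : ℝ))) * ((32 * n ^ 3 : ℕ) : ℝ)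
        ≤ ((Finset.univ.filter (fun i : Fin (32 * n ^ 3) =>
            (P.game (σ i)).run x y = GHState.exitA)).card : ℝ) := by
      rw [← hsum_card]
      calc (1 / 2 + 1 / (2 * (n : ℝ))) * ((32 * n ^ 3 : ℕ) : ℝ) ≤ ∑ i, c (σ i) (x, y) := hkey
        _ = ∑ i : Fin (32 * n ^ 3), (if (P.game (σ i)).run x y = GHState.exitA then (1 : ℝ) else 0) := by
            refine Finset.sum_congr rfl fun i _ => ?_
            rw [hc]; dsimp only; rw [hf]; rfl
    set cntA := (Finset.univ.filter (fun i : Fin (32 * n ^ 3) =>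
      (P.game (σ i)).run x y = GHState.exitA)).card with hcntA
    set cntB := (Finset.univ.filter (fun i : Fin (32 * n ^ 3) =>
      (P.game (σ i)).run x y = GHState.exitB)).card with hcntB
    have hdisj : Disjoint
        (Finset.univ.filter (fun i : Fin (32 * n ^ 3) => (P.game (σ i)).run x y = GHState.exitA))
        (Finset.univ.filter (fun i : Fin (32 * n ^ 3) => (P.game (σ i)).run x y = GHState.exitB)) := by
      rw [Finset.disjoint_filter]
      intro i _ h1 h2
      rw [h1] at h2
      cases h2
    have hAB : cntA + cntB ≤ 32 * n ^ 3 := by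
      rw [hcntA, hcntB, ← Finset.card_union_of_disjoint hdisj]
      calc _ ≤ (Finset.univ : Finset (Fin (32 * n ^ 3))).card := Finset.card_le_univ _
        _ = 32 * n ^ 3 := by rw [Finset.card_univ, Fintype.card_fin]
    have hABR : (cntA : ℝ) + (cntB : ℝ) ≤ ((32 * n ^ 3 : ℕ) : ℝ) := by exact_mod_cast hAB
    have h2B : 2 * (cntB : ℝ) < ((32 * n ^ 3 : ℕ) : ℝ) := by
      have hq := hcA
      have hexp : (1 / 2 + 1 / (2 * (n : ℝ))) * ((32 * n ^ 3 : ℕ) : ℝ)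
          = ((32 * n ^ 3 : ℕ) : ℝ) / 2 + ((32 * n ^ 3 : ℕ) : ℝ) / (n : ℝ) / 2 := by
        field_simp
      rw [hexp] at hq
      have hd : (0 : ℝ) < ((32 * n ^ 3 : ℕ) : ℝ) / (n : ℝ) := by positivity
      linarith
    have h2Bn : 2 * cntB < 32 * n ^ 3 := by exact_mod_cast h2B
    have hnot : ¬ (32 * n ^ 3 < 2 * cntB) := by omega
    simp only [Phi, hfilter]
    rw [← hcntB]
    simp [hnot]
  · -- f x y = true : target is exitB
    have hcB : (1 / 2 + 1 / (2 * (n : ℝ))) * ((32 * n ^ 3 : ℕ) : ℝ)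
        ≤ ((Finset.univ.filter (fun i : Fin (32 * n ^ 3) =>
            (P.game (σ i)).run x y = GHState.exitB)).card : ℝ) := by
      rw [← hsum_card]
      calc (1 / 2 + 1 / (2 * (n : ℝ))) * ((32 * n ^ 3 : ℕ) : ℝ) ≤ ∑ i, c (σ i) (x, y) := hkey
        _ = ∑ i : Fin (32 * n ^ 3), (if (P.game (σ i)).run x y = GHState.exitB then (1 : ℝ) else 0) := by
            refine Finset.sum_congr rfl fun i _ => ?_
            rw [hc]; dsimp only; rw [hf]; rfl
    set cntB := (Finset.univ.filter (fun i : Fin (32 * n ^ 3) =>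
      (P.game (σ i)).run x y = GHState.exitB)).card with hcntB
    have h2B : ((32 * n ^ 3 : ℕ) : ℝ) < 2 * (cntB : ℝ) := by
      have hexp : (1 / 2 + 1 / (2 * (n : ℝ))) * ((32 * n ^ 3 : ℕ) : ℝ)
          = ((32 * n ^ 3 : ℕ) : ℝ) / 2 + ((32 * n ^ 3 : ℕ) : ℝ) / (n : ℝ) / 2 := by
        field_simp
      rw [hexp] at hcB
      have hd : (0 : ℝ) < ((32 * n ^ 3 : ℕ) : ℝ) / (n : ℝ) := by positivity
      linarith
    have h2Bn : 32 * n ^ 3 < 2 * cntB := by exact_mod_cast h2B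
    simp only [Phi, hfilter]
    rw [← hcntB]
    simp [h2Bn]

end GHProof
namespace GHProof

open Finset

abbrev TupT (n s : ℕ) := Fin (32 * n ^ 3) → ((X n → Fin (s + 1) → Option (Fin (s + 1)))
  × (X n → Fin s → Option (Fin s)))

lemma two_pow_pos (n : ℕ) : 0 < 2 ^ n := Nat.pow_pos (by norm_num)

lemma card_TupT (n s : ℕ) : Fintype.card (TupT n s)
    = (((s + 2) ^ (s + 1)) ^ (2 ^ n) * ((s + 1) ^ s) ^ (2 ^ n)) ^ (32 * n ^ 3) := by
  simp [TupT, Fintype.card_fun, Fintype.card_prod, Fintype.card_option]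

lemma card_F (n : ℕ) : Fintype.card (X n → X n → Bool) = 2 ^ (2 ^ n * 2 ^ n) := by
  simp [Fintype.card_fun]
  rw [← pow_mul]

lemma nat_numeric (n : ℕ) (hn : 2 ≤ n) (h4 : 64 * n ^ 4 < 2 ^ (n - n / 2)) :
    ∑ s ∈ Finset.range (2 ^ (n / 2)), Fintype.card (TupT n s)
      < Fintype.card (X n → X n → Bool) := by
  rw [card_F]
  have hS1 : 2 ^ (n / 2) + 1 ≤ 2 ^ n := by
    have h1 : 2 ^ (n / 2) ≤ 2 ^ (n - 1) :=
      Nat.pow_le_pow_right (by norm_num) (by omega)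
    have h2 : (1 : ℕ) ≤ 2 ^ (n - 1) := two_pow_pos _
    have h3 : 2 ^ (n - 1) + 2 ^ (n - 1) = 2 ^ n := by
      rw [← two_mul, ← pow_succ']
      congr 1
      omega
    omega
  have hterm : ∀ s ∈ Finset.range (2 ^ (n / 2)), Fintype.card (TupT n s)
      ≤ 2 ^ (n * (2 * 2 ^ (n / 2) * 2 ^ n * (32 * n ^ 3))) := by
    intro s hs
    rw [Finset.mem_range] at hs
    rw [card_TupT]
    have hb1 : s + 2 ≤ 2 ^ n := by omega
    have hb2 : s + 1 ≤ 2 ^ n := by omega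
    calc (((s + 2) ^ (s + 1)) ^ (2 ^ n) * ((s + 1) ^ s) ^ (2 ^ n)) ^ (32 * n ^ 3)
        ≤ (((2 ^ n) ^ (s + 1)) ^ (2 ^ n) * ((2 ^ n) ^ s) ^ (2 ^ n)) ^ (32 * n ^ 3) :=
          Nat.pow_le_pow_left (Nat.mul_le_mul
            (Nat.pow_le_pow_left (Nat.pow_le_pow_left hb1 _) _)
            (Nat.pow_le_pow_left (Nat.pow_le_pow_left hb2 _) _)) _
      _ = (2 ^ (n * (s + 1) * 2 ^ n + n * s * 2 ^ n)) ^ (32 * n ^ 3) := by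
          rw [← pow_mul 2 n (s + 1), ← pow_mul 2 (n * (s + 1)) (2 ^ n),
            ← pow_mul 2 n s, ← pow_mul 2 (n * s) (2 ^ n), ← pow_add]
      _ ≤ (2 ^ (n * (2 * 2 ^ (n / 2) * 2 ^ n))) ^ (32 * n ^ 3) := by
          apply Nat.pow_le_pow_left
          apply Nat.pow_le_pow_right (by norm_num)
          have he : n * (s + 1) * 2 ^ n + n * s * 2 ^ n = (n * (2 * s + 1)) * 2 ^ n := by
            ring
          have he2 : n * (2 * 2 ^ (n / 2) * 2 ^ n) = (n * (2 * 2 ^ (n / 2))) * 2 ^ n := by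
            ring
          rw [he, he2]
          apply Nat.mul_le_mul_right
          apply Nat.mul_le_mul_left
          omega
      _ = 2 ^ (n * (2 * 2 ^ (n / 2) * 2 ^ n * (32 * n ^ 3))) := by
          rw [← pow_mul]
          congr 1
          ring
  calc ∑ s ∈ Finset.range (2 ^ (n / 2)), Fintype.card (TupT n s)
      ≤ (Finset.range (2 ^ (n / 2))).card
        • 2 ^ (n * (2 * 2 ^ (n / 2) * 2 ^ n * (32 * n ^ 3))) :=
        Finset.sum_le_card_nsmul _ _ _ hterm
    _ = 2 ^ (n / 2) * 2 ^ (n * (2 * 2 ^ (n / 2) * 2 ^ n * (32 * n ^ 3))) := by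
        rw [Finset.card_range, smul_eq_mul]
    _ < 2 ^ (2 ^ n * 2 ^ n) := by
        have hSkey : 64 * n ^ 4 * 2 ^ (n / 2) < 2 ^ n := by
          calc 64 * n ^ 4 * 2 ^ (n / 2) < 2 ^ (n - n / 2) * 2 ^ (n / 2) :=
                (Nat.mul_lt_mul_right (two_pow_pos _)).mpr h4
            _ = 2 ^ (n - n / 2 + n / 2) := (pow_add 2 _ _).symm
            _ = 2 ^ n := by congr 1; omega
        have hE : n * (2 * 2 ^ (n / 2) * 2 ^ n * (32 * n ^ 3)) ≤ (2 ^ n - 1) * 2 ^ n := by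
          have h1 : n * (2 * 2 ^ (n / 2) * 2 ^ n * (32 * n ^ 3))
              = (64 * n ^ 4 * 2 ^ (n / 2)) * 2 ^ n := by ring
          rw [h1]
          exact Nat.mul_le_mul_right _ (by omega)
        calc 2 ^ (n / 2) * 2 ^ (n * (2 * 2 ^ (n / 2) * 2 ^ n * (32 * n ^ 3)))
            ≤ 2 ^ (n / 2) * 2 ^ ((2 ^ n - 1) * 2 ^ n) :=
              Nat.mul_le_mul_left _ (Nat.pow_le_pow_right (by norm_num) hE)
          _ = 2 ^ (n / 2 + (2 ^ n - 1) * 2 ^ n) := (pow_add 2 _ _).symm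
          _ < 2 ^ (2 ^ n * 2 ^ n) := by
              apply Nat.pow_lt_pow_right (by norm_num)
              obtain ⟨d, hd⟩ : ∃ d, 2 ^ n = d + 1 :=
                ⟨2 ^ n - 1, by have := two_pow_pos n; omega⟩
              have hn2 : n < 2 ^ n := Nat.lt_two_pow_self
              have hdiv : n / 2 < d + 1 := by omega
              rw [hd]
              have hsimp : (d + 1 - 1) * (d + 1) = d * (d + 1) := by congr 1
              rw [hsimp, show (d + 1) * (d + 1) = d * (d + 1) + (d + 1) from by ring]
              have hA : 0 ≤ d * (d + 1) := Nat.zero_le _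
              linarith

lemma exists_hard (n : ℕ) (hn : 2 ≤ n) (h4 : 64 * n ^ 4 < 2 ^ (n - n / 2)) :
    ∃ f : X n → X n → Bool, ∀ s, s < 2 ^ (n / 2) →
      ¬ Nonempty (RandGHProtocol n s f ((1 : ℝ) / 2 - 1 / (n : ℝ))) := by
  classical
  by_contra hcon
  push_neg at hcon
  have hsub : (Finset.univ : Finset (X n → X n → Bool))
      ⊆ (Finset.range (2 ^ (n / 2))).biUnion
        (fun s => (Finset.univ : Finset (TupT n s)).image (Phi n s)) := by
    intro f _
    obtain ⟨s, hs, hP⟩ := hcon f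
    obtain ⟨t, ht⟩ := phi_covers n s (by omega) f hP
    exact Finset.mem_biUnion.mpr ⟨s, Finset.mem_range.mpr hs,
      Finset.mem_image.mpr ⟨t, Finset.mem_univ _, ht⟩⟩
  have hcard := Finset.card_le_card hsub
  rw [Finset.card_univ] at hcard
  have hle : ((Finset.range (2 ^ (n / 2))).biUnion
      (fun s => (Finset.univ : Finset (TupT n s)).image (Phi n s))).card
      ≤ ∑ s ∈ Finset.range (2 ^ (n / 2)), Fintype.card (TupT n s) := by
    calc _ ≤ ∑ s ∈ Finset.range (2 ^ (n / 2)),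
          ((Finset.univ : Finset (TupT n s)).image (Phi n s)).card :=
          Finset.card_biUnion_le
      _ ≤ ∑ s ∈ Finset.range (2 ^ (n / 2)), Fintype.card (TupT n s) :=
          Finset.sum_le_sum fun s _ => le_trans Finset.card_image_le
            (le_of_eq Finset.card_univ)
  have := nat_numeric n hn h4
  omega

end GHProof
namespace GHProof

open Finset

lemma h4_holds : ∀ n, 64 ≤ n → 64 * n ^ 4 < 2 ^ (n - n / 2) := by
  intro n
  induction n using Nat.strong_induction_on with
  | _ n ih =>
    intro hn
    by_cases h65 : n ≤ 65
    · interval_cases n <;> norm_num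
    · have hIH := ih (n - 2) (by omega) (by omega)
      have hexp : n - n / 2 = (n - 2) - (n - 2) / 2 + 1 := by omega
      rw [hexp, pow_succ 2 ((n - 2) - (n - 2) / 2)]
      have hk : 64 * n ^ 4 ≤ 2 * (64 * (n - 2) ^ 4) := by
        obtain ⟨k, rfl⟩ : ∃ k, n = k + 2 := ⟨n - 2, by omega⟩
        have hsimp : k + 2 - 2 = k := by omega
        rw [hsimp]
        have hk64 : 64 ≤ k := by omega
        have e1 : 64 * k ≤ k * k := Nat.mul_le_mul_right k hk64
        have e2 : 64 * (k * k) ≤ k * (k * k) := Nat.mul_le_mul_right (k * k) hk64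
        have e3 : 64 * (k * (k * k)) ≤ k * (k * (k * k)) :=
          Nat.mul_le_mul_right (k * (k * k)) hk64
        nlinarith [e1, e2, e3, hk64]
      omega

lemma ghr_ge (n : ℕ) (hn : 2 ≤ n) (f : X n → X n → Bool)
    (hhard : ∀ s, s < 2 ^ (n / 2) →
      ¬ Nonempty (RandGHProtocol n s f ((1 : ℝ) / 2 - 1 / (n : ℝ)))) :
    2 ^ (n / 2) ≤ GHr ((1 : ℝ) / 2 - 1 / (n : ℝ)) f := by
  have hne : {s : ℕ | Nonempty (RandGHProtocol n s f ((1 : ℝ) / 2 - 1 / (n : ℝ)))}.Nonempty :=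
    ⟨2 * 2 ^ n, exists_protocol n f hn⟩
  refine le_csInf hne fun s hs => ?_
  by_contra h
  push_neg at h
  exact hhard s h hs

noncomputable def hardF (n : ℕ) : (Fin n → Bool) → (Fin n → Bool) → Bool :=
  @dite _ (∃ f : X n → X n → Bool, ∀ s, s < 2 ^ (n / 2) →
      ¬ Nonempty (RandGHProtocol n s f ((1 : ℝ) / 2 - 1 / (n : ℝ))))
    (Classical.dec _) (fun h => h.choose) (fun _ => fun _ _ => false)

lemma hardF_ge (n : ℕ) (hn : 64 ≤ n) :
    2 ^ (n / 2) ≤ GHr ((1 : ℝ) / 2 - 1 / (n : ℝ)) (hardF n) := by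
  have hex := exists_hard n (by omega) (h4_holds n hn)
  have h2 : hardF n = hex.choose := by unfold hardF; rw [dif_pos hex]
  rw [h2]
  exact ghr_ge n (by omega) _ hex.choose_spec

lemma pow54 : ∀ n, 2 ≤ n → (5 / 4 : ℝ) ^ n ≤ (2 : ℝ) ^ (n / 2) := by
  intro n
  induction n using Nat.strong_induction_on with
  | _ n ih =>
    intro hn
    by_cases h3 : n ≤ 3
    · interval_cases n <;> norm_num
    · have hIH := ih (n - 2) (by omega) (by omega)
      obtain ⟨k, rfl⟩ : ∃ k, n = k + 2 := ⟨n - 2, by omega⟩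
      have hsimp : k + 2 - 2 = k := by omega
      rw [hsimp] at hIH
      have hdiv : (k + 2) / 2 = k / 2 + 1 := by omega
      rw [hdiv, pow_add, pow_add, pow_one]
      have h54 : (0 : ℝ) ≤ (5 / 4 : ℝ) ^ k := by positivity
      have hq : ((5 : ℝ) / 4) ^ 2 ≤ 2 := by norm_num
      exact mul_le_mul hIH hq (by positivity) (by positivity)

lemma hardF_real_ge (n : ℕ) (hn : 64 ≤ n) :
    (5 / 4 : ℝ) ^ n ≤ (GHr ((1 : ℝ) / 2 - 1 / (n : ℝ)) (hardF n) : ℝ) := by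
  calc (5 / 4 : ℝ) ^ n ≤ (2 : ℝ) ^ (n / 2) := pow54 n (by omega)
    _ = ((2 ^ (n / 2) : ℕ) : ℝ) := by push_cast; ring
    _ ≤ _ := by exact_mod_cast hardF_ge n hn

end GHProof

/-- There exists a family of Boolean functions `f_n` whose randomized
garden-hose complexity with error `ε(n) = 1/2 - 1/n` is not bounded above by
any polynomial in `n`; indeed it is exponential in `n`. -/
theorem exists_ghr_exponential_family :
    ∃ f : ∀ n : ℕ, (Fin n → Bool) → (Fin n → Bool) → Bool,
      (∀ q : Polynomial ℕ, ∃ n : ℕ,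
        q.eval n < GHr ((1 : ℝ) / 2 - 1 / (n : ℝ)) (f n)) ∧
      ∃ a : ℝ, 1 < a ∧ ∃ N : ℕ, ∀ n : ℕ, N ≤ n →
        a ^ n ≤ (GHr ((1 : ℝ) / 2 - 1 / (n : ℝ)) (f n) : ℝ) := by
  refine ⟨GHProof.hardF, ?_, 5 / 4, by norm_num, 64, fun n hn => GHProof.hardF_real_ge n hn⟩
  intro q
  set d := q.natDegree with hd
  set C := ∑ i ∈ Finset.range (d + 1), q.coeff i with hC
  have heval : ∀ n : ℕ, 1 ≤ n → q.eval n ≤ C * n ^ d := by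
    intro n hn1
    rw [Polynomial.eval_eq_sum_range, hC, Finset.sum_mul]
    refine Finset.sum_le_sum fun i hi => ?_
    have hid : i ≤ d := by
      rw [Finset.mem_range] at hi; omega
    exact Nat.mul_le_mul_left _ (Nat.pow_le_pow_right hn1 hid)
  have hsum : Summable (fun n : ℕ => (n : ℝ) ^ d * (4 / 5 : ℝ) ^ n) :=
    summable_pow_mul_geometric_of_norm_lt_one d
      (by rw [Real.norm_eq_abs]; rw [abs_of_pos (by norm_num : (0:ℝ) < 4/5)]; norm_num)
  have htend : Filter.Tendsto (fun n : ℕ => (n : ℝ) ^ d * (4 / 5 : ℝ) ^ n)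
      Filter.atTop (nhds 0) := hsum.tendsto_atTop_zero
  have hev : ∀ᶠ n : ℕ in Filter.atTop,
      (n : ℝ) ^ d * (4 / 5 : ℝ) ^ n < 1 / (C + 1) := by
    have hpos : (0 : ℝ) < 1 / ((C : ℝ) + 1) := by positivity
    exact htend.eventually_lt_const hpos
  obtain ⟨n, hn1, hn2⟩ := (hev.and (Filter.eventually_ge_atTop 64)).exists
  refine ⟨n, ?_⟩
  have hq1 : ((q.eval n : ℕ) : ℝ) ≤ (C : ℝ) * (n : ℝ) ^ d := by
    exact_mod_cast heval n (by omega)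
  have hkey : (C : ℝ) * (n : ℝ) ^ d < (5 / 4 : ℝ) ^ n := by
    have hmul : ((4 : ℝ) / 5) ^ n * (5 / 4 : ℝ) ^ n = 1 := by
      rw [← mul_pow]
      norm_num
    have hp1 : (0 : ℝ) < (5 / 4 : ℝ) ^ n := by positivity
    have hCp : (0 : ℝ) ≤ (C : ℝ) := by positivity
    have hx : (C : ℝ) * ((n : ℝ) ^ d * (4 / 5 : ℝ) ^ n) < 1 := by
      have h2 : (C : ℝ) * ((n : ℝ) ^ d * (4 / 5 : ℝ) ^ n)
          ≤ (C : ℝ) * (1 / ((C : ℝ) + 1)) :=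
        mul_le_mul_of_nonneg_left hn1.le hCp
      have h3 : (C : ℝ) * (1 / ((C : ℝ) + 1)) < 1 := by
        rw [mul_one_div, div_lt_one (by positivity)]
        linarith
      linarith
    calc (C : ℝ) * (n : ℝ) ^ d
        = ((C : ℝ) * ((n : ℝ) ^ d * (4 / 5 : ℝ) ^ n)) * (5 / 4 : ℝ) ^ n := by
          rw [mul_assoc, mul_assoc, hmul, mul_one]
      _ < 1 * (5 / 4 : ℝ) ^ n := mul_lt_mul_of_pos_right hx hp1
      _ = (5 / 4 : ℝ) ^ n := one_mul _
  have hfin : ((q.eval n : ℕ) : ℝ) < (GHr ((1 : ℝ) / 2 - 1 / (n : ℝ)) (GHProof.hardF n) : ℝ) :=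
    lt_of_le_of_lt hq1 (lt_of_lt_of_le hkey (GHProof.hardF_real_ge n hn2))
  exact_mod_cast hfin
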